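/- Every element of ^H k[M_{n,d}] is integral over the subalgebra GL_d * j(^H k[M_{n,n}]). (Theorem 3, case Z = {0}.) -/

import Mathlib

open MvPolynomial

/-- The action of `g ∈ GL_d(k)` on `k[M_{n,d}]` by `(g * F)(x) = F(x·g)`,
i.e. substituting `X(i,q) ↦ Σ_s X(i,s)·g(s,q)`. -/
noncomputable def colAct {k : Type*} [Field k] {n d : ℕ} (g : GL (Fin d) k) :
    MvPolynomial (Fin n × Fin d) k →ₐ[k] MvPolynomial (Fin n × Fin d) k :=
  aeval fun p => ∑ s : Fin d, X (p.1, s) * C ((g : Matrix (Fin d) (Fin d) k) s p.2)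

/-- The action of `h ∈ GL_n(k)` on `k[M_{n,d}]` by `(h · F)(x) = F(h⁻¹·x)`,
i.e. substituting `X(i,q) ↦ Σ_s (h⁻¹)(i,s)·X(s,q)`. -/
noncomputable def rowAct {k : Type*} [Field k] {n d : ℕ} (h : GL (Fin n) k) :
    MvPolynomial (Fin n × Fin d) k →ₐ[k] MvPolynomial (Fin n × Fin d) k :=
  aeval fun p =>
    ∑ s : Fin n, C (((h⁻¹ : GL (Fin n) k) : Matrix (Fin n) (Fin n) k) p.1 s) * X (s, p.2)

/-- The embedding `j : k[M_{n,n}] → k[M_{n,d}]`, `X(i,q) ↦ X(i,q)`. -/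
noncomputable def jmap {k : Type*} [Field k] {n d : ℕ} (hnd : n ≤ d) :
    MvPolynomial (Fin n × Fin n) k →ₐ[k] MvPolynomial (Fin n × Fin d) k :=
  aeval fun p => X (p.1, Fin.castLE hnd p.2)

/-- `^H k[M_{n,d}]`, the subalgebra of `H`-invariant polynomials. -/
def HinvAlg {k : Type*} [Field k] {n d : ℕ} (H : Subgroup (GL (Fin n) k)) :
    Subalgebra k (MvPolynomial (Fin n × Fin d) k) where
  carrier := {F | ∀ h ∈ H, rowAct h F = F}
  mul_mem' := fun ha hb h hh => by rw [map_mul, ha h hh, hb h hh]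
  add_mem' := fun ha hb h hh => by rw [map_add, ha h hh, hb h hh]
  algebraMap_mem' := fun r h hh => by simp

/-- `GL_d * j(^H k[M_{n,n}])`: the `k`-subalgebra of `k[M_{n,d}]` generated by all
polarizations `g * (j f)` of `H`-invariants of `n` vectors. -/
noncomputable def polarized {k : Type*} [Field k] {n d : ℕ} (hnd : n ≤ d)
    (H : Subgroup (GL (Fin n) k)) : Subalgebra k (MvPolynomial (Fin n × Fin d) k) :=
  Algebra.adjoin k
    {F | ∃ g : GL (Fin d) k, ∃ f ∈ HinvAlg (d := n) H, F = colAct g (jmap hnd f)}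


section AuxA

variable {K : Type*} [Field K]

private lemma isIntegral_of_aeval_inv (A₀ : Subring K) (x : K) (hx0 : x ≠ 0)
    (p : Polynomial A₀) (hp : Polynomial.aeval x⁻¹ p = x) : IsIntegral A₀ x := by
  classical
  set m := p.natDegree with hm
  refine ⟨Polynomial.X ^ (m + 1) -
      ∑ i ∈ Finset.range (m + 1), Polynomial.C (p.coeff i) * Polynomial.X ^ (m - i), ?_, ?_⟩
  · apply Polynomial.monic_X_pow_sub
    apply lt_of_le_of_lt (Polynomial.degree_sum_le _ _)
    refine lt_of_le_of_lt (Finset.sup_le fun i _ => ?_) (?_ : ((m : ℕ) : WithBot ℕ) < ((m+1 : ℕ) : WithBot ℕ))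
    · exact le_trans (Polynomial.degree_C_mul_X_pow_le _ _) (Nat.cast_le.mpr (Nat.sub_le _ _))
    · exact_mod_cast Nat.lt_succ_self m
  · have hsum : ∀ i ∈ Finset.range (m + 1),
        (algebraMap A₀ K (p.coeff i)) * x ^ (m - i)
          = ((algebraMap A₀ K (p.coeff i)) * x⁻¹ ^ i) * x ^ m := by
      intro i hi
      have hi' : i ≤ m := Nat.lt_succ_iff.mp (Finset.mem_range.mp hi)
      have hxi : (x : K) ^ i ≠ 0 := pow_ne_zero _ hx0
      rw [mul_assoc]
      congr 1
      rw [inv_pow, ← pow_sub_mul_pow x hi', mul_comm (x ^ (m-i)) (x^i), ← mul_assoc,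
        inv_mul_cancel₀ hxi, one_mul]
    rw [← Polynomial.aeval_def]
    simp only [map_sub, map_pow, Polynomial.aeval_X, map_sum, map_mul, Polynomial.aeval_C]
    rw [Finset.sum_congr rfl hsum, ← Finset.sum_mul]
    have hps : (∑ i ∈ Finset.range (m+1), algebraMap A₀ K (p.coeff i) * x⁻¹ ^ i) = x := by
      calc ∑ i ∈ Finset.range (m+1), algebraMap A₀ K (p.coeff i) * x⁻¹ ^ i
          = ∑ i ∈ Finset.range (m+1), p.coeff i • x⁻¹ ^ i :=
            Finset.sum_congr rfl fun i _ => (Algebra.smul_def _ _).symm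
        _ = Polynomial.aeval x⁻¹ p := (Polynomial.aeval_eq_sum_range _).symm
        _ = x := hp
    rw [hps, pow_succ]
    ring

private lemma isIntegral_of_forall_valuationSubring (A₀ : Subring K) (x : K)
    (h : ∀ V : ValuationSubring K, A₀ ≤ V.toSubring → x ∈ V) : IsIntegral A₀ x := by
  classical
  by_contra hni
  have hx0 : x ≠ 0 := fun e => hni (e ▸ isIntegral_zero)
  set B : Subring K := (Algebra.adjoin A₀ ({x⁻¹} : Set K)).toSubring with hBdef
  have hxinvB : x⁻¹ ∈ B := Algebra.self_mem_adjoin_singleton _ _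
  have hA0B : A₀ ≤ B := fun a ha => by
    exact (Algebra.adjoin A₀ ({x⁻¹} : Set K)).algebraMap_mem ⟨a, ha⟩
  have hnu : ¬ IsUnit (⟨x⁻¹, hxinvB⟩ : B) := by
    intro hu
    obtain ⟨u, hu1⟩ := isUnit_iff_exists_inv.mp hu
    have h1 : x⁻¹ * (u : K) = 1 := congrArg Subtype.val hu1
    have hux : (u : K) = x := by
      field_simp at h1
      exact h1
    have hxB' : x ∈ B := hux ▸ u.2
    rw [hBdef, Subalgebra.mem_toSubring] at hxB'
    rw [Algebra.adjoin_singleton_eq_range_aeval] at hxB'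
    have hxB := hxB'
    obtain ⟨p, hp⟩ := hxB
    exact hni (isIntegral_of_aeval_inv A₀ x hx0 p hp)
  obtain ⟨M, hMmax, hMle⟩ := Ideal.exists_le_maximal (Ideal.span {(⟨x⁻¹, hxinvB⟩ : B)})
    (by rwa [Ne, Ideal.span_singleton_eq_top])
  haveI := hMmax.isPrime
  obtain ⟨V, hV⟩ := (LocalSubring.ofPrime B M).exists_le_valuationSubring
  have hxinvM : (⟨x⁻¹, hxinvB⟩ : B) ∈ M := hMle (Ideal.subset_span rfl)
  refine absurd (h V ?_) ?_
  · exact le_trans (le_trans hA0B (LocalSubring.le_ofPrime B M)) hV.1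
  · intro hxV
    have hnu2 : ¬ IsUnit (Subring.inclusion (LocalSubring.le_ofPrime B M) ⟨x⁻¹, hxinvB⟩) := by
      rw [show Subring.inclusion (LocalSubring.le_ofPrime B M) ⟨x⁻¹, hxinvB⟩
          = algebraMap B (LocalSubring.ofPrime B M).toSubring ⟨x⁻¹, hxinvB⟩ from rfl]
      rw [IsLocalization.AtPrime.isUnit_to_map_iff _ M]
      exact fun hc => hc hxinvM
    apply hnu2
    have hloc := hV.2
    apply hloc.1
    exact isUnit_iff_exists_inv.mpr ⟨⟨x, hxV⟩, Subtype.ext (by simpa using inv_mul_cancel₀ hx0)⟩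


end AuxA

section AuxB

variable {K : Type*} [Field K]

private lemma finset_val_max (V : ValuationSubring K) {ι : Type*} [DecidableEq ι]
    (s : Finset ι) (r : ι → K) (hne : ∃ i ∈ s, r i ≠ 0) :
    ∃ i₀ ∈ s, r i₀ ≠ 0 ∧ ∀ i ∈ s, ∃ c ∈ V, r i = c * r i₀ := by
  classical
  induction s using Finset.induction with
  | empty => simp at hne
  | @insert a s ha ih =>
    by_cases hs : ∃ i ∈ s, r i ≠ 0
    · obtain ⟨i₀, hi₀s, hi₀0, hmax⟩ := ih hs
      by_cases hra : r a = 0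
      · refine ⟨i₀, Finset.mem_insert_of_mem hi₀s, hi₀0, ?_⟩
        intro i hi
        rcases Finset.mem_insert.mp hi with rfl | his
        · exact ⟨0, zero_mem V, by rw [hra, zero_mul]⟩
        · exact hmax i his
      · rcases V.mem_or_inv_mem (r a / r i₀) with hin | hin
        · refine ⟨i₀, Finset.mem_insert_of_mem hi₀s, hi₀0, ?_⟩
          intro i hi
          rcases Finset.mem_insert.mp hi with rfl | his
          · exact ⟨r i / r i₀, hin, by field_simp⟩
          · exact hmax i his
        · rw [inv_div] at hin
          refine ⟨a, Finset.mem_insert_self a s, hra, ?_⟩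
          intro i hi
          rcases Finset.mem_insert.mp hi with rfl | his
          · exact ⟨1, one_mem V, (one_mul _).symm⟩
          · obtain ⟨c, hcV, hc⟩ := hmax i his
            refine ⟨c * (r i₀ / r a), mul_mem hcV hin, ?_⟩
            rw [hc]
            field_simp
    · push_neg at hs
      obtain ⟨b, hb, hb0⟩ := hne
      have hba : b = a := by
        rcases Finset.mem_insert.mp hb with rfl | hbs
        · rfl
        · exact absurd (hs b hbs) hb0
      subst hba
      refine ⟨b, Finset.mem_insert_self b s, hb0, ?_⟩
      intro i hi
      rcases Finset.mem_insert.mp hi with rfl | his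
      · exact ⟨1, one_mem V, (one_mul _).symm⟩
      · exact ⟨0, zero_mem V, by rw [hs i his, zero_mul]⟩

private lemma elimination {d : ℕ} (V : ValuationSubring K) :
    ∀ (m : ℕ) (x : Matrix (Fin m) (Fin d) K),
    ∃ (g g' : Matrix (Fin d) (Fin d) K) (P : Finset (Fin d)),
      (∀ a b, g a b ∈ V) ∧ (∀ a b, g' a b ∈ V) ∧ g * g' = 1 ∧ P.card ≤ m ∧
      ∀ (i : Fin m) (q : Fin d), q ∉ P → (x * g) i q = 0 := by
  classical
  intro m
  induction m with
  | zero =>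
    intro x
    refine ⟨1, 1, ∅, ?_, ?_, by rw [mul_one], by simp, fun i => i.elim0⟩ <;>
    · intro a b
      rw [Matrix.one_apply]
      split
      · exact one_mem V
      · exact zero_mem V
  | succ m ih =>
    intro x
    obtain ⟨g₁, g₁', P₁, hg₁, hg₁', hgg₁, hP₁, hz₁⟩ := ih (Matrix.of fun i q => x i.castSucc q)
    have hz₁' : ∀ (i : Fin m) (q : Fin d), q ∉ P₁ → (x * g₁) i.castSucc q = 0 := by
      intro i q hq
      have h0 := hz₁ i q hq
      rw [Matrix.mul_apply] at h0 ⊢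
      simpa using h0
    set r : Fin d → K := fun q => (x * g₁) (Fin.last m) q with hr
    by_cases hcase : ∀ q, q ∉ P₁ → r q = 0
    · refine ⟨g₁, g₁', P₁, hg₁, hg₁', hgg₁, hP₁.trans (Nat.le_succ m), ?_⟩
      intro i q hq
      induction i using Fin.lastCases with
      | last => exact hcase q hq
      | cast j => exact hz₁' j q hq
    · push_neg at hcase
      obtain ⟨q₁, hq₁P, hq₁0⟩ := hcase
      obtain ⟨q₀, hq₀mem, hq₀0, hq₀max⟩ := finset_val_max V P₁ᶜ r
        ⟨q₁, Finset.mem_compl.mpr hq₁P, hq₁0⟩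
      have hq₀P : q₀ ∉ P₁ := Finset.mem_compl.mp hq₀mem
      choose! c hcV hcEq using hq₀max
      set N : Matrix (Fin d) (Fin d) K :=
        Matrix.of fun a b => if a = q₀ ∧ b ∉ P₁ ∧ b ≠ q₀ then -(c b) else 0 with hN
      have hNapp : ∀ a b, N a b = if a = q₀ ∧ b ∉ P₁ ∧ b ≠ q₀ then -(c b) else 0 :=
        fun a b => rfl
      have hNN : N * N = 0 := by
        ext a b
        rw [Matrix.mul_apply, Matrix.zero_apply]
        apply Finset.sum_eq_zero
        intro s _
        rcases eq_or_ne s q₀ with rfl | hs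
        · have h0 : N a s = 0 := by rw [hNapp]; simp
          rw [h0, zero_mul]
        · have h0 : N s b = 0 := by rw [hNapp]; simp [hs]
          rw [h0, mul_zero]
      have hmul : (1 + N) * (1 - N) = 1 := by
        have hexp : (1 + N) * (1 - N) = 1 - N + N - N * N := by noncomm_ring
        rw [hexp, hNN, sub_zero, sub_add_cancel]
      have hgV : ∀ a b, (1 + N : Matrix (Fin d) (Fin d) K) a b ∈ V := by
        intro a b
        rw [Matrix.add_apply]
        refine add_mem ?_ ?_
        · rw [Matrix.one_apply]; split
          · exact one_mem V
          · exact zero_mem V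
        · rw [hNapp]; split
          · next h => exact neg_mem (hcV b (Finset.mem_compl.mpr h.2.1))
          · exact zero_mem V
      have hgV' : ∀ a b, (1 - N : Matrix (Fin d) (Fin d) K) a b ∈ V := by
        intro a b
        rw [Matrix.sub_apply]
        refine sub_mem ?_ ?_
        · rw [Matrix.one_apply]; split
          · exact one_mem V
          · exact zero_mem V
        · rw [hNapp]; split
          · next h => exact neg_mem (hcV b (Finset.mem_compl.mpr h.2.1))
          · exact zero_mem V
      refine ⟨g₁ * (1 + N), (1 - N) * g₁', insert q₀ P₁, ?_, ?_, ?_, ?_, ?_⟩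
      · intro a b
        rw [Matrix.mul_apply]
        exact sum_mem fun s _ => mul_mem (hg₁ a s) (hgV s b)
      · intro a b
        rw [Matrix.mul_apply]
        exact sum_mem fun s _ => mul_mem (hgV' a s) (hg₁' s b)
      · rw [Matrix.mul_assoc g₁ (1 + N) _, ← Matrix.mul_assoc (1 + N) (1 - N) g₁',
          hmul, Matrix.one_mul, hgg₁]
      · exact (Finset.card_insert_le _ _).trans (Nat.succ_le_succ hP₁)
      · intro i q hq
        have hqq₀ : q ≠ q₀ := fun e => hq (e ▸ Finset.mem_insert_self _ _)
        have hqP₁ : q ∉ P₁ := fun h => hq (Finset.mem_insert_of_mem h)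
        rw [← Matrix.mul_assoc]
        have expand : ((x * g₁) * ((1 : Matrix (Fin d) (Fin d) K) + N)) i q
            = (x * g₁) i q + (x * g₁) i q₀ * (-(c q)) := by
          rw [Matrix.mul_add, Matrix.mul_one, Matrix.add_apply]
          congr 1
          rw [Matrix.mul_apply]
          rw [Finset.sum_eq_single q₀]
          · rw [hNapp]; simp [hqP₁, hqq₀]
          · intro s _ hs
            have h0 : N s q = 0 := by rw [hNapp]; simp [hs]
            rw [h0, mul_zero]
          · simp
        rw [expand]
        induction i using Fin.lastCases with
        | last =>
          show r q + r q₀ * (-(c q)) = 0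
          rw [hcEq q (Finset.mem_compl.mpr hqP₁)]
          ring
        | cast j =>
          rw [hz₁' j q hqP₁, hz₁' j q₀ hq₀P]
          ring

private lemma exists_perm {d n : ℕ} (P : Finset (Fin d)) (h : P.card ≤ n) :
    ∃ σ : Equiv.Perm (Fin d), ∀ q : Fin d, n ≤ (q : ℕ) → σ q ∉ P := by
  classical
  have hPd : P.card ≤ d := (Finset.card_le_univ P).trans_eq (Finset.card_fin d)
  set Q : Finset (Fin d) :=
    Finset.univ.map ⟨fun j : Fin P.card => Fin.castLE hPd j, Fin.castLE_injective hPd⟩ with hQ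
  have hQcard : Q.card = P.card := by simp [hQ]
  have hQlt : ∀ q ∈ Q, (q : ℕ) < P.card := by
    intro q hq
    rw [hQ, Finset.mem_map] at hq
    obtain ⟨j, -, rfl⟩ := hq
    exact j.2
  have e₁ : ↥P ≃ ↥Q := Fintype.equivOfCardEq (by simp [Fintype.card_coe, hQcard])
  have eC : ↥(Pᶜ) ≃ ↥(Qᶜ) := Fintype.equivOfCardEq
    (by simp [Fintype.card_coe, Finset.card_compl, hQcard])
  have eP : {x : Fin d // ¬ x ∈ P} ≃ ↥(Pᶜ) :=
    Equiv.subtypeEquivRight fun x => (Finset.mem_compl (s := P)).symm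
  have eQ : {x : Fin d // ¬ x ∈ Q} ≃ ↥(Qᶜ) :=
    Equiv.subtypeEquivRight fun x => (Finset.mem_compl (s := Q)).symm
  set τ : Equiv.Perm (Fin d) :=
    ((Equiv.sumCompl (· ∈ P)).symm.trans
      ((Equiv.sumCongr e₁ (eP.trans (eC.trans eQ.symm))).trans
        (Equiv.sumCompl (· ∈ Q)))) with hτ
  have hτP : ∀ a : Fin d, a ∈ P → τ a ∈ Q := by
    intro a ha
    rw [hτ]
    simp only [Equiv.trans_apply]
    rw [Equiv.sumCompl_symm_apply_of_pos ha]
    simp only [Equiv.sumCongr_apply, Sum.map_inl, Equiv.sumCompl_apply_inl]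
    exact (e₁ ⟨a, ha⟩).2
  refine ⟨τ.symm, ?_⟩
  intro q hq hmem
  have : q ∈ Q := by
    have := hτP _ hmem
    rwa [Equiv.apply_symm_apply] at this
  exact absurd (lt_of_lt_of_le (hQlt q this) h) (not_lt.mpr hq)

private lemma elimination' {n d : ℕ} (V : ValuationSubring K) (hnd : n ≤ d)
    (x : Matrix (Fin n) (Fin d) K) :
    ∃ g g' : Matrix (Fin d) (Fin d) K, (∀ a b, g a b ∈ V) ∧ (∀ a b, g' a b ∈ V) ∧
      g * g' = 1 ∧ ∀ (i : Fin n) (q : Fin d), n ≤ (q : ℕ) → (x * g) i q = 0 := by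
  classical
  obtain ⟨g₁, g₁', P, hg₁, hg₁', hgg₁, hP, hz⟩ := elimination V n x
  obtain ⟨σ, hσ⟩ := exists_perm P hP
  set Pm1 : Matrix (Fin d) (Fin d) K := Matrix.of fun a b => if a = σ b then 1 else 0 with hPm1
  set Pm2 : Matrix (Fin d) (Fin d) K := Matrix.of fun a b => if σ a = b then 1 else 0 with hPm2
  have hPm1app : ∀ a b, Pm1 a b = if a = σ b then 1 else 0 := fun a b => rfl
  have hPm2app : ∀ a b, Pm2 a b = if σ a = b then 1 else 0 := fun a b => rfl
  have hPmmul : Pm1 * Pm2 = 1 := by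
    ext a b
    rw [Matrix.mul_apply, Matrix.one_apply]
    rw [Finset.sum_eq_single (σ.symm a)]
    · rw [hPm1app, hPm2app]
      simp [Equiv.apply_symm_apply]
    · intro s _ hs
      have hne : a ≠ σ s := fun e => hs (by rw [e, Equiv.symm_apply_apply])
      rw [hPm1app]
      simp [hne]
    · simp
  refine ⟨g₁ * Pm1, Pm2 * g₁', ?_, ?_, ?_, ?_⟩
  · intro a b
    rw [Matrix.mul_apply]
    refine sum_mem fun s _ => mul_mem (hg₁ a s) ?_
    rw [hPm1app]; split
    · exact one_mem V
    · exact zero_mem V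
  · intro a b
    rw [Matrix.mul_apply]
    refine sum_mem fun s _ => mul_mem ?_ (hg₁' s b)
    rw [hPm2app]; split
    · exact one_mem V
    · exact zero_mem V
  · rw [Matrix.mul_assoc g₁ Pm1 _, ← Matrix.mul_assoc Pm1 Pm2 g₁', hPmmul, Matrix.one_mul, hgg₁]
  · intro i q hq
    rw [← Matrix.mul_assoc]
    have happ : ((x * g₁) * Pm1) i q = (x * g₁) i (σ q) := by
      rw [Matrix.mul_apply, Finset.sum_eq_single (σ q)]
      · rw [hPm1app]; simp
      · intro s _ hs
        rw [hPm1app]; simp [hs]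
      · simp
    rw [happ]
    exact hz i (σ q) (hσ q hq)

private lemma sum_castLE {n d : ℕ} (hnd : n ≤ d) {M : Type*} [AddCommMonoid M]
    (w : Fin d → M) (hw : ∀ s : Fin d, n ≤ (s : ℕ) → w s = 0) :
    ∑ s : Fin d, w s = ∑ t : Fin n, w (Fin.castLE hnd t) := by
  classical
  have hset : Finset.univ.map ⟨Fin.castLE hnd, Fin.castLE_injective hnd⟩
      = Finset.univ.filter (fun s : Fin d => (s : ℕ) < n) := by
    ext s
    constructor
    · intro hs
      rw [Finset.mem_map] at hs
      obtain ⟨t, -, rfl⟩ := hs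
      rw [Finset.mem_filter]
      exact ⟨Finset.mem_univ _, t.2⟩
    · intro hs
      rw [Finset.mem_filter] at hs
      rw [Finset.mem_map]
      exact ⟨⟨s.1, hs.2⟩, Finset.mem_univ _, by ext; rfl⟩
  rw [← Finset.sum_subset (Finset.filter_subset (fun s : Fin d => (s : ℕ) < n) Finset.univ)
    (fun x _ hx => hw x (le_of_not_gt (by simpa using hx)))]
  rw [← hset, Finset.sum_map]
  rfl


end AuxB

section AuxC
variable {K : Type*} [Field K]


private lemma eval_mem_of_coeffs {ι : Type*} [Fintype ι] (V : ValuationSubring K)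
    (P : MvPolynomial ι K) (hP : ∀ m, coeff m P ∈ V) (t : ι → K) (ht : ∀ v, t v ∈ V) :
    eval t P ∈ V := by
  rw [MvPolynomial.eval_eq']
  exact sum_mem fun m _ => mul_mem (hP m) (prod_mem fun v _ => pow_mem (ht v) _)

private lemma coeff_mem_of_GL {k : Type*} [Field k] [IsAlgClosed k] {d : ℕ}
    (κ : k →+* K) (V : ValuationSubring K) (hκ : ∀ a : k, κ a ∈ V)
    (P : MvPolynomial (Fin d × Fin d) K)
    (hGL : ∀ g : GL (Fin d) k,
      eval (fun v => κ ((g : Matrix (Fin d) (Fin d) k) v.1 v.2)) P ∈ V)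
    (m : (Fin d × Fin d) →₀ ℕ) : coeff m P ∈ V := by
  classical
  by_cases hm : m ∈ P.support
  swap
  · rw [MvPolynomial.notMem_support_iff.mp hm]; exact zero_mem V
  set S := P.support with hS
  set w : GL (Fin d) k → (↥S → k) := fun g m' =>
    ∏ v : Fin d × Fin d, ((g : Matrix (Fin d) (Fin d) k) v.1 v.2) ^ (m'.1 v) with hw
  set δ : ↥S → (↥S → k) := fun a b => if a = b then 1 else 0 with hδ
  have hspan : Submodule.span k (Set.range w) = ⊤ := by
    by_contra hne
    obtain ⟨z, -, hz⟩ := SetLike.exists_of_lt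
      (show Submodule.span k (Set.range w) < ⊤ from lt_top_iff_ne_top.mpr hne)
    set sp := Submodule.span k (Set.range w) with hsp
    have hz0 : Submodule.Quotient.mk (p := sp) z ≠ 0 := by
      rw [Ne, Submodule.Quotient.mk_eq_zero]
      exact hz
    set b := Module.Basis.ofVectorSpace k ((↥S → k) ⧸ sp) with hb
    have hrepr : b.repr (Submodule.Quotient.mk z) ≠ 0 :=
      fun e => hz0 (by simpa using (LinearEquiv.map_eq_zero_iff b.repr).mp e)
    obtain ⟨i, hi⟩ := Finsupp.ne_iff.mp hrepr
    set φ : ((↥S → k) →ₗ[k] k) := (b.coord i) ∘ₗ sp.mkQ with hφ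
    have hφw : ∀ g, φ (w g) = 0 := by
      intro g
      have h0 : sp.mkQ (w g) = 0 := by
        rw [Submodule.mkQ_apply, Submodule.Quotient.mk_eq_zero]
        exact Submodule.subset_span ⟨g, rfl⟩
      rw [hφ, LinearMap.comp_apply, h0, map_zero]
    have hφz : φ z ≠ 0 := by
      rw [hφ, LinearMap.comp_apply, Submodule.mkQ_apply, Module.Basis.coord_apply]
      simpa using hi
    have hexists : ∃ a : ↥S, φ (δ a) ≠ 0 := by
      by_contra hall
      push_neg at hall
      apply hφz
      have hzdecomp : z = ∑ a : ↥S, z a • δ a := pi_eq_sum_univ z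
      rw [hzdecomp, map_sum]
      simp only [map_smul, hall, smul_zero]
      exact Finset.sum_const_zero
    obtain ⟨a₀, ha₀⟩ := hexists
    set p₀ : MvPolynomial (Fin d × Fin d) k :=
      ∑ a ∈ S.attach, MvPolynomial.C (φ (δ a)) * MvPolynomial.monomial a.1 1 with hp₀
    have hp₀coeff : coeff a₀.1 p₀ = φ (δ a₀) := by
      rw [hp₀, MvPolynomial.coeff_sum]
      rw [Finset.sum_eq_single a₀]
      · rw [MvPolynomial.coeff_C_mul, MvPolynomial.coeff_monomial, if_pos rfl, mul_one]
      · intro b' _ hba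
        have hne : b'.1 ≠ a₀.1 := fun e => hba (Subtype.ext e)
        rw [MvPolynomial.coeff_C_mul, MvPolynomial.coeff_monomial, if_neg hne, mul_zero]
      · intro habs; exact absurd (Finset.mem_attach _ _) habs
    have hp₀GL : ∀ g : GL (Fin d) k,
        eval (fun v => (g : Matrix (Fin d) (Fin d) k) v.1 v.2) p₀ = 0 := by
      intro g
      rw [hp₀, map_sum]
      have hterm : ∀ a ∈ S.attach, eval (fun v => (g : Matrix (Fin d) (Fin d) k) v.1 v.2)
          (MvPolynomial.C (φ (δ a)) * MvPolynomial.monomial a.1 1) = φ (δ a) * w g a := by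
        intro a _
        rw [map_mul, eval_C, eval_monomial]
        rw [hw]
        simp only [Finsupp.prod_pow]
        rw [one_mul]
      rw [Finset.sum_congr rfl hterm]
      rw [← hφw g]
      have hwg : w g = ∑ a : ↥S, (w g a) • δ a := pi_eq_sum_univ (w g)
      conv_rhs => rw [hwg]
      rw [map_sum]
      rw [Finset.univ_eq_attach]
      exact Finset.sum_congr rfl fun a _ => by rw [map_smul, smul_eq_mul, mul_comm]
    -- p₀ = 0 by density of GL_d(k)
    set detpoly : MvPolynomial (Fin d × Fin d) k :=
      (Matrix.of fun a b : Fin d => (MvPolynomial.X (a, b) : MvPolynomial (Fin d × Fin d) k)).det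
      with hdp
    have hevaldet : ∀ t : (Fin d × Fin d) → k,
        eval t detpoly = (Matrix.of fun a b : Fin d => t (a, b)).det := by
      intro t
      rw [hdp, RingHom.map_det]
      congr 1
      ext a b
      simp [Matrix.map_apply]
    have hdet0 : detpoly ≠ 0 := by
      intro h0
      have h1 := hevaldet (fun v => if (v.1 : ℕ) = (v.2 : ℕ) then (1 : k) else 0)
      rw [h0] at h1
      have h2 : (Matrix.of fun a b : Fin d =>
          if ((a : ℕ) = (b : ℕ)) then (1:k) else 0) = (1 : Matrix (Fin d) (Fin d) k) := by
        ext a b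
        rw [Matrix.one_apply, Matrix.of_apply]
        by_cases hab : a = b
        · rw [if_pos hab, if_pos (by rw [hab])]
        · rw [if_neg hab, if_neg (fun e => hab (Fin.ext e))]
      rw [h2, Matrix.det_one, map_zero] at h1
      exact one_ne_zero h1.symm
    have hp₀zero : p₀ = 0 := by
      have hmulz : p₀ * detpoly = 0 := by
        apply MvPolynomial.funext
        intro t
        rw [map_mul, map_zero]
        by_cases hdt : (Matrix.of fun a b : Fin d => t (a, b)).det = 0
        · rw [hevaldet, hdt, mul_zero]
        · set g : GL (Fin d) k :=
            Matrix.GeneralLinearGroup.mk'' _ (isUnit_iff_ne_zero.mpr hdt) with hg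
          have hcoe : (fun v : Fin d × Fin d => (g : Matrix (Fin d) (Fin d) k) v.1 v.2) = t := by
            funext v
            show (Matrix.of fun a b : Fin d => t (a, b)) v.1 v.2 = t v
            rw [Matrix.of_apply]
          rw [← hcoe, hp₀GL g, zero_mul]
      rcases mul_eq_zero.mp hmulz with h | h
      · exact h
      · exact absurd h hdet0
    rw [hp₀zero, MvPolynomial.coeff_zero] at hp₀coeff
    exact ha₀ hp₀coeff.symm
  -- use the spanning family to express the coefficient
  have hmem : δ ⟨m, hm⟩ ∈ Submodule.span k (Set.range w) := hspan ▸ Submodule.mem_top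
  obtain ⟨c, hc⟩ := Finsupp.mem_span_range_iff_exists_finsupp.mp hmem
  have heval : ∀ g : GL (Fin d) k,
      eval (fun v => κ ((g : Matrix (Fin d) (Fin d) k) v.1 v.2)) P
        = ∑ a ∈ S.attach, coeff a.1 P * κ (w g a) := by
    intro g
    rw [MvPolynomial.eval_eq']
    rw [← Finset.sum_attach S
      (fun m' => coeff m' P * ∏ v, (κ ((g : Matrix (Fin d) (Fin d) k) v.1 v.2)) ^ (m' v))]
    refine Finset.sum_congr rfl fun a _ => ?_
    congr 1
    rw [hw, map_prod]
    exact Finset.prod_congr rfl fun v _ => (map_pow κ _ _).symm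
  have hkey : coeff m P = ∑ g ∈ c.support, κ (c g)
      * eval (fun v => κ ((g : Matrix (Fin d) (Fin d) k) v.1 v.2)) P := by
    rw [Finset.sum_congr rfl (fun g _ => by rw [heval g, Finset.mul_sum])]
    rw [Finset.sum_comm]
    have hinner : ∀ a ∈ S.attach,
        (∑ g ∈ c.support, κ (c g) * (coeff a.1 P * κ (w g a)))
          = coeff a.1 P * κ (δ ⟨m, hm⟩ a) := by
      intro a _
      have happ : δ ⟨m, hm⟩ a = ∑ g ∈ c.support, c g * w g a := by
        rw [← hc]
        rw [Finsupp.sum_apply']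
        rw [Finsupp.sum]
        exact Finset.sum_congr rfl fun g _ => by rw [Pi.smul_apply, smul_eq_mul]
      rw [happ, map_sum, Finset.mul_sum]
      refine Finset.sum_congr rfl fun g _ => ?_
      rw [map_mul]
      ring
    rw [Finset.sum_congr rfl hinner]
    rw [Finset.sum_eq_single (⟨m, hm⟩ : ↥S)]
    · rw [hδ]; simp
    · intro b' _ hb'
      have : δ ⟨m, hm⟩ b' = 0 := by
        rw [hδ]
        exact if_neg (fun e => hb' e.symm)
      rw [this, map_zero, mul_zero]
    · intro habs; exact absurd (Finset.mem_attach _ _) habs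
  rw [hkey]
  exact sum_mem fun g _ => mul_mem (hκ _) (hGL g)


end AuxC

section Main


variable {k : Type*} [Field k] [IsAlgClosed k] {n d : ℕ}

set_option maxHeartbeats 1000000 in
private lemma keyC {K : Type*} [Field K] (hnd : n ≤ d) (H : Subgroup (GL (Fin n) k))
    (χ : MvPolynomial (Fin n × Fin d) k →+* K)
    (V : ValuationSubring K)
    (hA : ∀ r ∈ polarized hnd H, χ r ∈ V)
    (f : MvPolynomial (Fin n × Fin n) k) (hf : f ∈ HinvAlg (d := n) H)
    (gm : Matrix (Fin d) (Fin d) K)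
    (hgm : ∀ a b, gm a b ∈ V) :
    eval₂ (χ.comp MvPolynomial.C)
      (fun p : Fin n × Fin n =>
        ((Matrix.of fun i q => χ (X (i, q))) * gm) p.1 (Fin.castLE hnd p.2)) f ∈ V := by
  classical
  set κ : k →+* K := χ.comp MvPolynomial.C with hκdef
  set xmat : Matrix (Fin n) (Fin d) K := Matrix.of fun i q => χ (X (i, q)) with hxmat
  set Θ : MvPolynomial (Fin n × Fin n) k →+* MvPolynomial (Fin d × Fin d) K :=
    eval₂Hom ((MvPolynomial.C : K →+* MvPolynomial (Fin d × Fin d) K).comp κ)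
      (fun p => ∑ s : Fin d, MvPolynomial.C (xmat p.1 s) * X (s, Fin.castLE hnd p.2)) with hΘ
  have hκV : ∀ a : k, κ a ∈ V := by
    intro a
    have hmem : MvPolynomial.C (σ := Fin n × Fin d) a ∈ polarized hnd H := by
      have h2 := (polarized hnd H).algebraMap_mem a
      rwa [MvPolynomial.algebraMap_eq] at h2
    exact hA _ hmem
  have claim1 : ∀ g : GL (Fin d) k,
      eval (fun v : Fin d × Fin d => κ ((g : Matrix (Fin d) (Fin d) k) v.1 v.2)) (Θ f)
        = χ (colAct g (jmap hnd f)) := by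
    intro g
    have hhom : ((MvPolynomial.eval
          (fun v : Fin d × Fin d => κ ((g : Matrix (Fin d) (Fin d) k) v.1 v.2))).comp Θ)
        = χ.comp (((colAct g).comp (jmap hnd)).toRingHom) := by
      apply MvPolynomial.ringHom_ext
      · intro r
        simp [hΘ, colAct, jmap, hκdef]
      · rintro ⟨i, q⟩
        simp [hΘ, colAct, jmap, hxmat, hκdef]
    exact RingHom.congr_fun hhom f
  have claim2 : (MvPolynomial.eval (fun v : Fin d × Fin d => gm v.1 v.2)).comp Θ
      = eval₂Hom κ (fun p : Fin n × Fin n => (xmat * gm) p.1 (Fin.castLE hnd p.2)) := by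
    apply MvPolynomial.ringHom_ext
    · intro r
      simp [hΘ]
    · rintro ⟨i, q⟩
      simp [hΘ, Matrix.mul_apply]
  show eval₂ κ (fun p : Fin n × Fin n => (xmat * gm) p.1 (Fin.castLE hnd p.2)) f ∈ V
  have hgoal : eval₂ κ
      (fun p : Fin n × Fin n => (xmat * gm) p.1 (Fin.castLE hnd p.2)) f
        = MvPolynomial.eval (fun v : Fin d × Fin d => gm v.1 v.2) (Θ f) :=
    (RingHom.congr_fun claim2 f).symm
  rw [hgoal]
  refine eval_mem_of_coeffs V (Θ f) ?_ _ (fun v => hgm v.1 v.2)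
  refine coeff_mem_of_GL κ V hκV (Θ f) ?_
  intro g
  rw [claim1 g]
  exact hA _ (Algebra.subset_adjoin ⟨g, f, hf, rfl⟩)

noncomputable def PsiMap (k : Type*) [Field k] (n d : ℕ) :
    MvPolynomial (Fin n × Fin d) k →+*
      MvPolynomial (Fin n × Fin d) (MvPolynomial (Fin n × Fin n) k) :=
  eval₂Hom ((MvPolynomial.C : MvPolynomial (Fin n × Fin n) k →+* _).comp
      (MvPolynomial.C : k →+* MvPolynomial (Fin n × Fin n) k))
    (fun p => ∑ t : Fin n, MvPolynomial.C (X (p.1, t)) * X (t, p.2))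

set_option maxHeartbeats 1000000 in
private lemma coeff_Psi_mem (H : Subgroup (GL (Fin n) k))
    (F : MvPolynomial (Fin n × Fin d) k) (hF : F ∈ HinvAlg H)
    (β : (Fin n × Fin d) →₀ ℕ) :
    (PsiMap k n d F).coeff β ∈ HinvAlg (d := n) H := by
  intro h hh
  have key : (MvPolynomial.map (rowAct (d := n) h).toRingHom).comp (PsiMap k n d)
      = (PsiMap k n d).comp (rowAct (d := d) h).toRingHom := by
    apply MvPolynomial.ringHom_ext
    · intro r
      simp [PsiMap, rowAct]
    · rintro ⟨i, q⟩
      show (MvPolynomial.map (rowAct (d := n) h).toRingHom) (PsiMap k n d (X (i, q)))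
          = PsiMap k n d ((rowAct (d := d) h).toRingHom (X (i, q)))
      have hPsiX : ∀ (s : Fin n) (q' : Fin d), PsiMap k n d (X (s, q'))
          = ∑ t : Fin n, MvPolynomial.C (X (s, t)) * X (t, q') := by
        intro s q'; simp [PsiMap]
      have hrowX : ∀ (s : Fin n) (t : Fin n),
          (rowAct (d := n) h).toRingHom (X (s, t))
            = ∑ u : Fin n, C (((h⁻¹ : GL (Fin n) k) : Matrix (Fin n) (Fin n) k) s u)
                * X (u, t) := by
        intro s t; simp [rowAct]
      have hrowXd : (rowAct (d := d) h).toRingHom (X (i, q))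
          = ∑ u : Fin n, C (((h⁻¹ : GL (Fin n) k) : Matrix (Fin n) (Fin n) k) i u)
              * X (u, q) := by
        simp [rowAct]
      rw [hPsiX, hrowXd, map_sum, map_sum]
      have hLterm : ∀ t : Fin n,
          (MvPolynomial.map (rowAct (d := n) h).toRingHom)
              (MvPolynomial.C (X (i, t)) * X (t, q))
            = ∑ u : Fin n,
                (MvPolynomial.C (MvPolynomial.C
                    (((h⁻¹ : GL (Fin n) k) : Matrix (Fin n) (Fin n) k) i u))
                  * MvPolynomial.C (X (u, t))) * X (t, q) := by
        intro t
        rw [map_mul, MvPolynomial.map_C, MvPolynomial.map_X, hrowX, map_sum, Finset.sum_mul]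
        exact Finset.sum_congr rfl fun u _ => by simp
      have hRterm : ∀ u : Fin n,
          PsiMap k n d (C (((h⁻¹ : GL (Fin n) k) : Matrix (Fin n) (Fin n) k) i u) * X (u, q))
            = ∑ t : Fin n,
                (MvPolynomial.C (MvPolynomial.C
                    (((h⁻¹ : GL (Fin n) k) : Matrix (Fin n) (Fin n) k) i u))
                  * MvPolynomial.C (X (u, t))) * X (t, q) := by
        intro u
        rw [map_mul, hPsiX]
        have hPsiC : PsiMap k n d (C (((h⁻¹ : GL (Fin n) k) : Matrix (Fin n) (Fin n) k) i u))
            = MvPolynomial.C (MvPolynomial.C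
                (((h⁻¹ : GL (Fin n) k) : Matrix (Fin n) (Fin n) k) i u)) := by
          simp [PsiMap]
        rw [hPsiC, Finset.mul_sum]
        exact Finset.sum_congr rfl fun t _ => by rw [← mul_assoc]
      rw [Finset.sum_congr rfl fun t _ => hLterm t, Finset.sum_congr rfl fun u _ => hRterm u]
      rw [Finset.sum_comm]
  have h1 := RingHom.congr_fun key F
  have h2 : (rowAct (d := d) h).toRingHom F = F := hF h hh
  simp only [RingHom.comp_apply] at h1
  rw [h2] at h1
  have h3 := congrArg (MvPolynomial.coeff β) h1
  rw [MvPolynomial.coeff_map] at h3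
  exact h3

set_option maxHeartbeats 1000000 in
private lemma main_val {K : Type*} [Field K] (hnd : n ≤ d) (H : Subgroup (GL (Fin n) k))
    (F : MvPolynomial (Fin n × Fin d) k) (hF : F ∈ HinvAlg H)
    (χ : MvPolynomial (Fin n × Fin d) k →+* K) (V : ValuationSubring K)
    (hA : ∀ r ∈ polarized hnd H, χ r ∈ V) : χ F ∈ V := by
  classical
  set κ : k →+* K := χ.comp MvPolynomial.C with hκdef
  set xmat : Matrix (Fin n) (Fin d) K := Matrix.of fun i q => χ (X (i, q)) with hxmat
  obtain ⟨g, g', hg, hg', hgg', hz⟩ := elimination' V hnd xmat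
  set φ₀ : MvPolynomial (Fin n × Fin n) k →+* K :=
    eval₂Hom κ (fun p => (xmat * g) p.1 (Fin.castLE hnd p.2)) with hφ₀
  set E : MvPolynomial (Fin n × Fin d) (MvPolynomial (Fin n × Fin n) k) →+* K :=
    eval₂Hom φ₀ (fun p => g' (Fin.castLE hnd p.1) p.2) with hE
  have hEΨ : E.comp (PsiMap k n d) = χ := by
    apply MvPolynomial.ringHom_ext
    · intro r
      simp [hE, hφ₀, PsiMap, hκdef]
    · rintro ⟨i, q⟩
      show E (PsiMap k n d (X (i, q))) = χ (X (i, q))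
      have hL : E (PsiMap k n d (X (i, q)))
          = ∑ t : Fin n, (xmat * g) i (Fin.castLE hnd t) * g' (Fin.castLE hnd t) q := by
        simp [hE, PsiMap, hφ₀]
      rw [hL]
      have hx2 : χ (X (i, q)) = ((xmat * g) * g') i q := by
        rw [Matrix.mul_assoc, hgg', Matrix.mul_one]
        rfl
      rw [hx2, Matrix.mul_apply]
      exact (sum_castLE hnd (fun s => (xmat * g) i s * g' s q)
        (fun s hs => by show (xmat * g) i s * g' s q = 0; rw [hz i s hs, zero_mul])).symm
  have hform : χ F = E (PsiMap k n d F) := (RingHom.congr_fun hEΨ F).symm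
  rw [hform]
  have hEexp : E (PsiMap k n d F)
      = ∑ β ∈ (PsiMap k n d F).support,
          φ₀ ((PsiMap k n d F).coeff β)
            * ∏ p ∈ β.support, (g' (Fin.castLE hnd p.1) p.2) ^ β p := by
    rw [hE]
    exact MvPolynomial.eval₂_eq φ₀ _ _
  rw [hEexp]
  refine sum_mem fun β _ => mul_mem ?_ (prod_mem fun p _ => pow_mem (hg' _ _) _)
  exact keyC hnd H χ V hA _ (coeff_Psi_mem H F hF β) g hg


end Main

set_option maxHeartbeats 2000000 in
set_option synthInstance.maxHeartbeats 400000 in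
/-- Theorem 3 (case `Z = {0}`): every `H`-invariant of `d` vectors is integral over the
algebra of polarized invariants `GL_d * j(^H k[M_{n,n}])`. -/
theorem stmt2 {k : Type*} [Field k] [IsAlgClosed k] {n d : ℕ} (hn : 0 < n) (hnd : n ≤ d)
    (H : Subgroup (GL (Fin n) k)) (F : MvPolynomial (Fin n × Fin d) k)
    (hF : F ∈ HinvAlg H) :
    IsIntegral (polarized hnd H) F := by
  classical
  set χ : MvPolynomial (Fin n × Fin d) k →+*
      FractionRing (MvPolynomial (Fin n × Fin d) k) := algebraMap _ _ with hχ
  set A₀ : Subring (FractionRing (MvPolynomial (Fin n × Fin d) k)) :=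
    (χ.comp ((polarized hnd H).val.toRingHom)).range with hA₀
  have hint : IsIntegral A₀ (χ F) := by
    refine isIntegral_of_forall_valuationSubring A₀ (χ F) ?_
    intro V hV
    refine main_val hnd H F hF χ V ?_
    intro r hr
    exact hV ⟨⟨r, hr⟩, rfl⟩
  obtain ⟨p, pmonic, hp⟩ := hint
  set e : (polarized hnd H) →+* A₀ :=
    (χ.comp ((polarized hnd H).val.toRingHom)).rangeRestrict with he
  have hsurj : Function.Surjective e := RingHom.rangeRestrict_surjective _
  have hlift : p ∈ Polynomial.lifts e :=
    (Polynomial.lifts_iff_coeff_lifts p).mpr (fun nn => hsurj (p.coeff nn))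
  haveI : Nontrivial A₀ := ⟨0, 1, fun e' => zero_ne_one (congrArg Subtype.val e')⟩
  obtain ⟨q, hqmap, -, hqmonic⟩ := Polynomial.lifts_and_degree_eq_and_monic hlift pmonic
  refine ⟨q, hqmonic, ?_⟩
  have hinj : Function.Injective χ := IsFractionRing.injective _ _
  apply hinj
  rw [map_zero]
  have hcompeq : (χ.comp (algebraMap (polarized hnd H) (MvPolynomial (Fin n × Fin d) k)))
      = (algebraMap A₀ (FractionRing (MvPolynomial (Fin n × Fin d) k))).comp e :=
    RingHom.ext fun a => rfl
  have hev : χ (Polynomial.eval₂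
        (algebraMap (polarized hnd H) (MvPolynomial (Fin n × Fin d) k)) F q)
      = Polynomial.eval₂ (algebraMap A₀ (FractionRing (MvPolynomial (Fin n × Fin d) k)))
          (χ F) p := by
    rw [Polynomial.hom_eval₂, ← hqmap, Polynomial.eval₂_map, hcompeq]
  rw [hev]
  exact hp
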